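/- Let V : ℝⁿ → ℝ be continuous, positive semidefinite (V(x) ≥ 0 for all x) and radially unbounded (V(x) → ∞ as ‖x‖₂ → ∞). Let x : ℕ → ℝⁿ, u : ℕ → ℝᵐ, y : ℕ → ℝᵐ be discrete-time state, input, and output sequences, let ν, ρ, α, κ, B₁, B₂ > 0, N₀ ∈ ℕ with N₀ ≥ 1, and let k ∈ ℕ be the initial time step. Assume: (a) the very strict quasi-passivity inequality V(x[i+1]) − V(x[i]) ≤ u[i]ᵀy[i] − ν‖u[i]‖₂² − ρ‖y[i]‖₂² + α holds for all i ≥ k; (b) the strong finite-time detectability inequality Σ_{i=s}^{s+N₀−1} ‖y[i]‖₂² ≥ κ‖x[s]‖₂² holds for all s ≥ k; (c) ‖u[i]‖₂ ≤ B₁ for all i ≥ k; (d) ‖x[k]‖₂ ≤ B₂. Then the state is ultimately bounded: there exists D > 0 such that ‖x[s]‖₂ ≤ D for all s ≥ k. -/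

import Mathlib

open scoped RealInnerProductSpace

/-- Ultimate boundedness of a strongly finite-time detectable, very strictly
quasi-passive discrete-time system with bounded input and bounded initial state. -/
theorem stmt_0 {n m : ℕ} (V : EuclideanSpace ℝ (Fin n) → ℝ)
    (hVcont : Continuous V) (hVpos : ∀ z, 0 ≤ V z)
    (hVrad : ∀ M : ℝ, ∃ r : ℝ, ∀ z, r ≤ ‖z‖ → M ≤ V z)
    (x : ℕ → EuclideanSpace ℝ (Fin n)) (u y : ℕ → EuclideanSpace ℝ (Fin m))
    (ν ρ α κ B₁ B₂ : ℝ) (hν : 0 < ν) (hρ : 0 < ρ) (hα : 0 < α) (hκ : 0 < κ)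
    (hB₁ : 0 < B₁) (hB₂ : 0 < B₂) (N₀ : ℕ) (hN₀ : 1 ≤ N₀) (k : ℕ)
    (hdiss : ∀ i, k ≤ i →
      V (x (i + 1)) - V (x i) ≤ ⟪u i, y i⟫ - ν * ‖u i‖ ^ 2 - ρ * ‖y i‖ ^ 2 + α)
    (hdet : ∀ s, k ≤ s → κ * ‖x s‖ ^ 2 ≤ ∑ i ∈ Finset.range N₀, ‖y (s + i)‖ ^ 2)
    (hu : ∀ i, k ≤ i → ‖u i‖ ≤ B₁) (hx : ‖x k‖ ≤ B₂) :
    ∃ D > 0, ∀ s, k ≤ s → ‖x s‖ ≤ D := by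
  set C : ℝ := B₁ ^ 2 / (2 * ρ) + α with hCdef
  clear_value C
  have hC : 0 < C := by rw [hCdef]; positivity
  -- per-step estimate
  have hstep : ∀ i, k ≤ i → V (x (i + 1)) ≤ V (x i) - (ρ / 2) * ‖y i‖ ^ 2 + C := by
    intro i hi
    have h1 := hdiss i hi
    have h2 := real_inner_le_norm (u i) (y i)
    have h3 := hu i hi
    have h4 : (0:ℝ) ≤ ν * ‖u i‖ ^ 2 := by positivity
    have key : ‖u i‖ * ‖y i‖ ≤ (ρ / 2) * ‖y i‖ ^ 2 + B₁ ^ 2 / (2 * ρ) := by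
      have h2ρ : (0:ℝ) < 2 * ρ := by linarith
      rw [show (ρ / 2) * ‖y i‖ ^ 2 + B₁ ^ 2 / (2 * ρ)
            = (ρ ^ 2 * ‖y i‖ ^ 2 + B₁ ^ 2) / (2 * ρ) by field_simp,
          le_div_iff₀ h2ρ]
      nlinarith [sq_nonneg (‖u i‖ - ρ * ‖y i‖), norm_nonneg (u i)]
    linarith
  -- growth over a window of length N
  have hwin : ∀ s, k ≤ s → ∀ N : ℕ,
      V (x (s + N)) ≤ V (x s) - (ρ / 2) * (∑ i ∈ Finset.range N, ‖y (s + i)‖ ^ 2) + N * C := by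
    intro s hs N
    induction N with
    | zero => simp
    | succ N ih =>
      have hstepN := hstep (s + N) (by omega)
      rw [Finset.sum_range_succ]
      have hadd : s + (N + 1) = s + N + 1 := by omega
      rw [hadd]
      push_cast
      linarith
  -- choose radius R
  set R : ℝ := Real.sqrt (2 * ((N₀ : ℝ) * C) / (ρ * κ)) with hRdef
  have hR0 : 0 ≤ R := Real.sqrt_nonneg _
  have hN₀C : (0:ℝ) ≤ (N₀ : ℝ) * C := by positivity
  have hRsq : (ρ * κ / 2) * R ^ 2 = (N₀ : ℝ) * C := by
    rw [hRdef, Real.sq_sqrt (by positivity)]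
    field_simp
  clear_value R
  -- supremum of V on the closed ball of radius R
  obtain ⟨z₀, hz₀mem, hz₀⟩ := (isCompact_closedBall (0 : EuclideanSpace ℝ (Fin n)) R).exists_isMaxOn
    ⟨0, by simpa using hR0⟩ hVcont.continuousOn
  set M : ℝ := V z₀ with hMdef
  clear_value M
  set K : ℝ := max (V (x k)) M + (N₀ : ℝ) * C with hKdef
  clear_value K
  -- growth from time k
  have hgrow : ∀ d : ℕ, V (x (k + d)) ≤ V (x k) + (d : ℝ) * C := by
    intro d
    have h := hwin k le_rfl d
    have hsum : (0:ℝ) ≤ ∑ i ∈ Finset.range d, ‖y (k + i)‖ ^ 2 :=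
      Finset.sum_nonneg fun _ _ => sq_nonneg _
    have hpos : (0:ℝ) ≤ ρ / 2 * ∑ i ∈ Finset.range d, ‖y (k + i)‖ ^ 2 := by positivity
    linarith
  -- V is bounded by K for all s ≥ k
  have hK : ∀ s, k ≤ s → V (x s) ≤ K := by
    intro s
    induction s using Nat.strong_induction_on with
    | _ s ih =>
      intro hs
      by_cases hcase : s < k + N₀
      · have hd : s = k + (s - k) := by omega
        have hdc : ((s - k : ℕ) : ℝ) * C ≤ (N₀ : ℝ) * C := by
          have : ((s - k : ℕ) : ℝ) ≤ (N₀ : ℝ) := by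
            exact_mod_cast Nat.le_of_lt (by omega)
          nlinarith
        have := hgrow (s - k)
        rw [← hd] at this
        have hKle : V (x k) ≤ max (V (x k)) M := le_max_left _ _
        rw [hKdef]
        linarith
      · push_neg at hcase
        set t := s - N₀ with htdef
        have ht : k ≤ t := by omega
        have hts : t + N₀ = s := by omega
        have hlt : t < s := by omega
        have hwt := hwin t ht N₀
        rw [hts] at hwt
        have hdt := hdet t ht
        have hmul : (ρ / 2) * (κ * ‖x t‖ ^ 2) ≤ (ρ / 2) * ∑ i ∈ Finset.range N₀, ‖y (t + i)‖ ^ 2 :=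
          mul_le_mul_of_nonneg_left hdt (by linarith)
        have hVs : V (x s) ≤ V (x t) - (ρ * κ / 2) * ‖x t‖ ^ 2 + (N₀ : ℝ) * C := by
          nlinarith
        by_cases hxt : ‖x t‖ ≤ R
        · have hmem : x t ∈ Metric.closedBall (0 : EuclideanSpace ℝ (Fin n)) R := by
            simpa [Metric.mem_closedBall, dist_eq_norm] using hxt
          have hVt : V (x t) ≤ M := by rw [hMdef]; exact hz₀ hmem
          have hMle : M ≤ max (V (x k)) M := le_max_right _ _
          have hxnn : (0:ℝ) ≤ (ρ * κ / 2) * ‖x t‖ ^ 2 := by positivity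
          rw [hKdef]
          linarith
        · push_neg at hxt
          have hsq : R ^ 2 ≤ ‖x t‖ ^ 2 := by nlinarith [hxt, hR0]
          have h2 : (N₀ : ℝ) * C ≤ (ρ * κ / 2) * ‖x t‖ ^ 2 := by
            rw [← hRsq]
            have hρκ : (0:ℝ) ≤ ρ * κ / 2 := by positivity
            exact mul_le_mul_of_nonneg_left hsq hρκ
          have hih := ih t hlt ht
          linarith
  -- conclude using radial unboundedness
  obtain ⟨r, hr⟩ := hVrad (K + 1)
  refine ⟨max r 1, lt_of_lt_of_le one_pos (le_max_right _ _), fun s hs => ?_⟩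
  by_contra hcon
  push_neg at hcon
  have hrle : r ≤ ‖x s‖ := le_trans (le_max_left _ _) hcon.le
  have := hr (x s) hrle
  have := hK s hs
  linarith
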